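/- (Theorem 1, part ii) Under Assumptions 1 and 2, let the GTT stepsize satisfy 0 < γ < 2/L, so that ρ := max{|1−γm|, |1−γL|} < 1, and define σ := 1 + h·(C₀C₁/m² + C₂/m). If the sampling period satisfies ρ^τ·σ < 1, i.e. h < (C₀C₁/m² + C₂/m)⁻¹·(ρ^{−τ} − 1), then the GTT iterates satisfy, for every k ≥ 0: ‖x_k − x*(t_k)‖ ≤ (ρ^τσ)^k·‖x₀ − x*(t₀)‖ + ρ^τ·(h²/2)·(C₀²C₁/m³ + 2C₀C₂/m² + C₃/m)·(1 − (ρ^τσ)^k)/(1 − ρ^τσ). -/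

import Mathlib

open Set Filter
noncomputable section
set_option linter.unusedSectionVars false
set_option linter.unusedVariables false

section General
variable {V : Type*} [NormedAddCommGroup V] [NormedSpace ℝ V]

lemma norm_sub_le_half_of_deriv_le {f f' : ℝ → V} {K : ℝ}
    (hf : ∀ s, HasDerivAt f (f' s) s) (hb : ∀ s ∈ Icc (0:ℝ) 1, ‖f' s‖ ≤ K * s) :
    ‖f 1 - f 0‖ ≤ K / 2 := by
  have hB : ∀ s : ℝ, HasDerivAt (fun s : ℝ => K * s ^ 2 / 2) (K * s) s := by
    intro s
    have : HasDerivAt (fun s : ℝ => K * s ^ 2 / 2) (K * (2 * s ^ 1) / 2) s :=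
      ((hasDerivAt_pow 2 s).const_mul K).div_const 2
    convert this using 1; ring
  have key : ∀ x ∈ Icc (0:ℝ) 1, ‖f x - f 0‖ ≤ K * x ^ 2 / 2 :=
    image_norm_le_of_norm_deriv_right_le_deriv_boundary
      (f := fun s => f s - f 0) (f' := f') (B := fun s => K * s ^ 2 / 2) (B' := fun s => K * s)
      (fun s _ => ((hf s).sub_const (f 0)).continuousAt.continuousWithinAt)
      (fun s _ => ((hf s).sub_const (f 0)).hasDerivWithinAt)
      (by simp) hB (fun s hs => hb s ⟨hs.1, le_of_lt hs.2⟩)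
  simpa using key 1 ⟨zero_le_one, le_refl 1⟩

lemma lip_of_fderiv {F : Type*} [NormedAddCommGroup F] [NormedSpace ℝ F]
    {E : Type*} [NormedAddCommGroup E] [NormedSpace ℝ E]
    {f : E → F} {f' : E → E →L[ℝ] F} {C : ℝ}
    (hf : ∀ x, HasFDerivAt f (f' x) x) (hb : ∀ x, ‖f' x‖ ≤ C) (x y : E) :
    ‖f y - f x‖ ≤ C * ‖y - x‖ :=
  (convex_univ).norm_image_sub_le_of_norm_hasFDerivWithin_le
    (fun z _ => (hf z).hasFDerivWithinAt) (fun z _ => hb z) trivial trivial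

lemma lip_of_deriv {f : ℝ → V} {f' : ℝ → V} {C : ℝ}
    (hf : ∀ x, HasDerivAt f (f' x) x) (hb : ∀ x, ‖f' x‖ ≤ C) (x y : ℝ) :
    ‖f y - f x‖ ≤ C * ‖y - x‖ :=
  (convex_univ).norm_image_sub_le_of_norm_hasDerivWithin_le
    (fun z _ => (hf z).hasDerivWithinAt) (fun z _ => hb z) trivial trivial

lemma deriv_le_of_lip {f : ℝ → V} {v : V} {t K : ℝ}
    (hf : HasDerivAt f v t) (hb : ∀ u u' : ℝ, ‖f u - f u'‖ ≤ K * |u - u'|) :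
    ‖v‖ ≤ K := by
  rw [hasDerivAt_iff_tendsto_slope] at hf
  have htt : Tendsto (fun u => ‖slope f t u‖) (nhdsWithin t {t}ᶜ) (nhds ‖v‖) :=
    (continuous_norm.tendsto v).comp hf
  refine le_of_tendsto htt ?_
  filter_upwards [self_mem_nhdsWithin] with u hu
  have hut : u ≠ t := hu
  rw [slope_def_module, norm_smul, Real.norm_eq_abs, abs_inv]
  have h2 := hb u t
  have h3 : (0:ℝ) < |u - t| := abs_pos.2 (sub_ne_zero.2 hut)
  calc |u - t|⁻¹ * ‖f u - f t‖ ≤ |u - t|⁻¹ * (K * |u - t|) :=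
        mul_le_mul_of_nonneg_left h2 (by positivity)
    _ = K := by field_simp

lemma path_hasDerivAt' (b d : V) (s : ℝ) : HasDerivAt (fun s : ℝ => b + s • d) d s := by
  simpa using ((hasDerivAt_id s).smul_const d).const_add b

end General

section InnerP
variable {E : Type*} [NormedAddCommGroup E] [InnerProductSpace ℝ E] [CompleteSpace E]

def dualIso (E : Type*) [NormedAddCommGroup E] [InnerProductSpace ℝ E] [CompleteSpace E] :
    E ≃ₗᵢ[ℝ] (StrongDual ℝ E) := InnerProductSpace.toDual ℝ E

lemma dualIso_apply (v w : E) : (dualIso E v) w = inner ℝ v w := rfl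

lemma grad_path_hasDerivAt' {g : E → E} {H : E → E →L[ℝ] E}
    (hspec : ∀ z, HasFDerivAt g (H z) z) (b d : E) (s : ℝ) :
    HasDerivAt (fun s : ℝ => g (b + s • d)) (H (b + s • d) d) s :=
  (hspec (b + s • d)).comp_hasDerivAt s (path_hasDerivAt' b d s)

/-- strong monotonicity of a vector field with coercive derivative -/
lemma strong_mono {g : E → E} {H : E → E →L[ℝ] E} {m : ℝ}
    (hspec : ∀ z, HasFDerivAt g (H z) z)
    (hlow : ∀ z v, m * ‖v‖ ^ 2 ≤ inner ℝ v (H z v)) (a b : E) :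
    m * ‖a - b‖ ^ 2 ≤ inner ℝ (a - b) (g a - g b) := by
  set d := a - b with hd
  set φ : ℝ → ℝ := fun s => (dualIso E d) (g (b + s • d)) - s * (m * ‖d‖ ^ 2) with hφdef
  have hχ : ∀ s : ℝ, HasDerivAt φ ((dualIso E d) (H (b + s • d) d) - m * ‖d‖ ^ 2) s := by
    intro s
    have h2 : HasDerivAt (fun s : ℝ => (dualIso E d) (g (b + s • d)))
        ((dualIso E d) (H (b + s • d) d)) s :=
      ((dualIso E d).hasFDerivAt).comp_hasDerivAt s (grad_path_hasDerivAt' hspec b d s)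
    have h3 := h2.sub ((hasDerivAt_id' s).mul_const (m * ‖d‖ ^ 2))
    rw [one_mul] at h3
    exact h3
  have hmono : Monotone φ := by
    apply monotone_of_deriv_nonneg (fun s => (hχ s).differentiableAt)
    intro s
    rw [(hχ s).deriv]
    have := hlow (b + s • d) d
    rw [← dualIso_apply] at this
    linarith
  have h01 := hmono (zero_le_one)
  simp only [hφdef, zero_smul, add_zero, one_smul, zero_mul, sub_zero, one_mul] at h01
  have hb1 : b + d = a := by rw [hd]; abel
  rw [hb1] at h01
  have : (dualIso E d) (g a) - (dualIso E d) (g b) ≥ m * ‖d‖ ^ 2 := by linarith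
  rw [← map_sub] at this
  rw [← dualIso_apply]
  linarith



lemma norm_apply_le_of_symm (B : E →L[ℝ] E) (r : ℝ) (hr : 0 ≤ r)
    (hsym : ∀ v w : E, (inner ℝ (B v) w : ℝ) = inner ℝ (B w) v)
    (hq : ∀ v : E, |(inner ℝ v (B v) : ℝ)| ≤ r * ‖v‖ ^ 2) (v : E) :
    ‖B v‖ ≤ r * ‖v‖ := by
  by_cases hBv : B v = 0
  · rw [hBv, norm_zero]; positivity
  have hv : v ≠ 0 := by rintro rfl; simp at hBv
  have key : ∀ u w : E, (inner ℝ (B u) w : ℝ) ≤ (r / 2) * (‖u‖ ^ 2 + ‖w‖ ^ 2) := by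
    intro u w
    have e1 : (inner ℝ (B (u + w)) (u + w) : ℝ) - inner ℝ (B (u - w)) (u - w)
        = 4 * inner ℝ (B u) w := by
      simp only [map_add, map_sub, inner_add_left, inner_add_right, inner_sub_left,
        inner_sub_right]
      have := hsym u w
      linarith [hsym w u]
    have h1 : (inner ℝ (B (u+w)) (u+w) : ℝ) ≤ r * ‖u + w‖ ^ 2 := by
      have := hq (u + w); rw [real_inner_comm] at this; exact (abs_le.1 this).2
    have h2 : -(r * ‖u - w‖ ^ 2) ≤ (inner ℝ (B (u-w)) (u-w) : ℝ) := by
      have := hq (u - w); rw [real_inner_comm] at this; exact (abs_le.1 this).1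
    have hpar : ‖u + w‖ ^ 2 + ‖u - w‖ ^ 2 = 2 * (‖u‖ ^ 2 + ‖w‖ ^ 2) := by
      have := parallelogram_law_with_norm ℝ u w
      ring_nf; ring_nf at this; linarith
    nlinarith
  have hBvn : 0 < ‖B v‖ := norm_pos_iff.2 hBv
  have := key v ((‖v‖ / ‖B v‖) • B v)
  rw [inner_smul_right, real_inner_self_eq_norm_sq, norm_smul] at this
  have hnn : ‖(‖v‖ / ‖B v‖)‖ = ‖v‖ / ‖B v‖ := by
    rw [Real.norm_eq_abs, abs_of_nonneg (by positivity)]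
  rw [hnn] at this
  have hv0 : 0 < ‖v‖ := norm_pos_iff.2 hv
  have h2 : ‖v‖ / ‖B v‖ * ‖B v‖ ^ 2 = ‖v‖ * ‖B v‖ := by field_simp
  have h3 : (‖v‖ / ‖B v‖ * ‖B v‖) ^ 2 = ‖v‖ ^ 2 := by field_simp
  rw [h2, h3] at this
  nlinarith
def dualCLM (E : Type*) [NormedAddCommGroup E] [InnerProductSpace ℝ E] [CompleteSpace E] :
    E →L[ℝ] (StrongDual ℝ E) := ((dualIso E).toContinuousLinearEquiv : E ≃L[ℝ] _)

lemma hess_symm (f : E → ℝ) (g : E → E) (H : E → E →L[ℝ] E)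
    (hg : ∀ x, HasGradientAt f (g x) x) (hH : ∀ x, HasFDerivAt g (H x) x) (x v w : E) :
    (inner ℝ (H x v) w : ℝ) = inner ℝ (H x w) v := by
  have hf' : ∀ y, HasFDerivAt f (dualIso E (g y)) y := fun y => (hg y).hasFDerivAt
  have hf'' : HasFDerivAt (fun y => dualIso E (g y)) ((dualCLM E).comp (H x)) x :=
    (dualCLM E).hasFDerivAt.comp x (hH x)
  have := second_derivative_symmetric hf' hf'' v w
  exact this

lemma scalar_key {m L γ ρ S D Q : ℝ} (hm : 0 < m) (hmL : m ≤ L) (hγ0 : 0 < γ)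
    (hD : 0 ≤ D) (hA : m * D ≤ S) (hB : S ≤ L * D) (he3 : Q ≤ (m + L) * S - m * L * D)
    (hρm : (1 - γ * m) ^ 2 ≤ ρ ^ 2) (hρL : (1 - γ * L) ^ 2 ≤ ρ ^ 2) :
    D - 2 * γ * S + γ ^ 2 * Q ≤ ρ ^ 2 * D := by
  have hγ2 : 0 ≤ γ ^ 2 := sq_nonneg γ
  have hQ : γ ^ 2 * Q ≤ γ ^ 2 * ((m + L) * S - m * L * D) := mul_le_mul_of_nonneg_left he3 hγ2
  rcases le_or_gt (γ * (m + L)) 2 with hcase | hcase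
  · have hp : 0 ≤ γ * (2 - γ * (m + L)) * (S - m * D) :=
      mul_nonneg (mul_nonneg hγ0.le (by linarith)) (by linarith)
    have hm2 : (1 - γ * m) ^ 2 * D ≤ ρ ^ 2 * D := mul_le_mul_of_nonneg_right hρm hD
    nlinarith [hp, hQ, hm2]
  · have hp : 0 ≤ γ * (γ * (m + L) - 2) * (L * D - S) :=
      mul_nonneg (mul_nonneg hγ0.le (by linarith)) (by linarith)
    have hm2 : (1 - γ * L) ^ 2 * D ≤ ρ ^ 2 * D := mul_le_mul_of_nonneg_right hρL hD
    nlinarith [hp, hQ, hm2]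

/-- one step of gradient descent contracts towards the fixed point -/
lemma gd_contraction {g : E → E} {H : E → E →L[ℝ] E} {m L γ ρ : ℝ}
    (hm : 0 < m) (hmL : m ≤ L)
    (hspec : ∀ z, HasFDerivAt g (H z) z)
    (hsym : ∀ z v w, (inner ℝ (H z v) w : ℝ) = inner ℝ (H z w) v)
    (hlow : ∀ z v, m * ‖v‖ ^ 2 ≤ inner ℝ v (H z v))
    (hup : ∀ z, ‖H z‖ ≤ L)
    (hγ0 : 0 < γ)
    (hρ : ρ = max |1 - γ * m| |1 - γ * L|)
    {xs : E} (hfix : g xs = 0) (y : E) :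
    ‖y - γ • g y - xs‖ ≤ ρ * ‖y - xs‖ := by
  set d := y - xs with hd
  set Δ := g y - g xs with hΔ
  have hρ0 : 0 ≤ ρ := by rw [hρ]; exact le_max_of_le_left (abs_nonneg _)
  have hA : m * ‖d‖ ^ 2 ≤ inner ℝ d Δ := strong_mono hspec hlow y xs
  have hlip : ‖Δ‖ ≤ L * ‖d‖ := lip_of_fderiv hspec hup xs y
  have hB : (inner ℝ d Δ : ℝ) ≤ L * ‖d‖ ^ 2 := by
    calc (inner ℝ d Δ : ℝ) ≤ ‖d‖ * ‖Δ‖ := real_inner_le_norm d Δ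
      _ ≤ ‖d‖ * (L * ‖d‖) := mul_le_mul_of_nonneg_left hlip (norm_nonneg d)
      _ = L * ‖d‖ ^ 2 := by ring
  set c := (m + L) / 2 with hc
  set r := (L - m) / 2 with hr
  have hr0 : 0 ≤ r := by rw [hr]; linarith
  have hshift : ‖Δ - c • d‖ ≤ r * ‖d‖ := by
    have hgc : ∀ z : E, HasFDerivAt (fun z : E => g z - c • z)
        (H z - c • ContinuousLinearMap.id ℝ E) z := fun z =>
      (hspec z).sub (((ContinuousLinearMap.id ℝ E).hasFDerivAt).const_smul c)
    have hbnd : ∀ z : E, ‖H z - c • ContinuousLinearMap.id ℝ E‖ ≤ r := by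
      intro z
      apply ContinuousLinearMap.opNorm_le_bound _ hr0
      intro v
      apply norm_apply_le_of_symm _ _ hr0
      · intro v w
        simp only [ContinuousLinearMap.sub_apply, ContinuousLinearMap.smul_apply,
          ContinuousLinearMap.id_apply, inner_sub_left, real_inner_smul_left]
        rw [hsym z v w, real_inner_comm v w]
      · intro v
        have h1 := hlow z v
        have h2 : (inner ℝ v (H z v) : ℝ) ≤ L * ‖v‖ ^ 2 := by
          calc (inner ℝ v (H z v) : ℝ) ≤ ‖v‖ * ‖H z v‖ := real_inner_le_norm _ _
            _ ≤ ‖v‖ * (L * ‖v‖) := by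
                refine mul_le_mul_of_nonneg_left ?_ (norm_nonneg v)
                calc ‖H z v‖ ≤ ‖H z‖ * ‖v‖ := (H z).le_opNorm v
                  _ ≤ L * ‖v‖ := mul_le_mul_of_nonneg_right (hup z) (norm_nonneg v)
            _ = L * ‖v‖ ^ 2 := by ring
        simp only [ContinuousLinearMap.sub_apply, ContinuousLinearMap.smul_apply,
          ContinuousLinearMap.id_apply, inner_sub_right, real_inner_smul_right]
        rw [real_inner_self_eq_norm_sq, abs_le]
        constructor <;> · rw [hr, hc]; nlinarith [h1, h2]
    have hlp := lip_of_fderiv hgc hbnd xs y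
    have he : (g y - c • y) - (g xs - c • xs) = Δ - c • d := by
      rw [hΔ, hd, smul_sub]; abel
    rw [he] at hlp
    exact hlp
  set S : ℝ := inner ℝ d Δ with hS
  have e1 : ‖d - γ • Δ‖ ^ 2 = ‖d‖ ^ 2 - 2 * γ * S + γ ^ 2 * ‖Δ‖ ^ 2 := by
    rw [norm_sub_sq_real, inner_smul_right, norm_smul, Real.norm_eq_abs, abs_of_pos hγ0, hS]
    ring
  have e3 : ‖Δ‖ ^ 2 ≤ (m + L) * S - m * L * ‖d‖ ^ 2 := by
    have h1 : ‖Δ - c • d‖ ^ 2 ≤ (r * ‖d‖) ^ 2 :=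
      pow_le_pow_left₀ (norm_nonneg _) hshift 2
    rw [norm_sub_sq_real, inner_smul_right, norm_smul, Real.norm_eq_abs] at h1
    have h2 : (inner ℝ Δ d : ℝ) = S := by rw [hS]; exact real_inner_comm d Δ
    rw [h2] at h1
    rw [hc, hr] at h1
    nlinarith [sq_abs ((m + L)/2), abs_of_nonneg (show (0:ℝ) ≤ (m+L)/2 by linarith)]
  have hρm : (1 - γ * m) ^ 2 ≤ ρ ^ 2 := by
    rw [hρ, ← sq_abs (1 - γ * m)]
    exact pow_le_pow_left₀ (abs_nonneg _) (le_max_left _ _) 2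
  have hρL : (1 - γ * L) ^ 2 ≤ ρ ^ 2 := by
    rw [hρ, ← sq_abs (1 - γ * L)]
    exact pow_le_pow_left₀ (abs_nonneg _) (le_max_right _ _) 2
  have key : ‖d - γ • Δ‖ ^ 2 ≤ (ρ * ‖d‖) ^ 2 := by
    rw [e1]
    calc ‖d‖ ^ 2 - 2 * γ * S + γ ^ 2 * ‖Δ‖ ^ 2 ≤ ρ ^ 2 * ‖d‖ ^ 2 :=
          scalar_key hm hmL hγ0 (sq_nonneg _) hA hB e3 hρm hρL
      _ = (ρ * ‖d‖) ^ 2 := by ring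
  have hgoal : ‖d - γ • Δ‖ ≤ ρ * ‖d‖ := by
    have h3 := Real.sqrt_le_sqrt key
    rwa [Real.sqrt_sq (norm_nonneg _), Real.sqrt_sq (mul_nonneg hρ0 (norm_nonneg d))] at h3
  have he : y - γ • g y - xs = d - γ • Δ := by
    rw [hΔ, hd, hfix]; simp only [sub_zero]; abel
  rw [he]
  exact hgoal

end InnerP

/-- The setting of a time-varying, smooth, strongly convex optimization problem
`min_{x ∈ ℝⁿ} f(x;t)`, bundling the objective `f`, its derivatives, the Hessian
inverse, the optimal trajectory `x*(t)`, and Assumptions 1 and 2 of the paper. -/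
structure TVOpt (n : ℕ) where
  /-- the objective `f(x;t)` -/
  f : EuclideanSpace ℝ (Fin n) → ℝ → ℝ
  /-- the gradient `∇ₓ f(x;t)` -/
  grad : EuclideanSpace ℝ (Fin n) → ℝ → EuclideanSpace ℝ (Fin n)
  /-- the Hessian `∇ₓₓ f(x;t)` -/
  hess : EuclideanSpace ℝ (Fin n) → ℝ →
    EuclideanSpace ℝ (Fin n) →L[ℝ] EuclideanSpace ℝ (Fin n)
  /-- the Hessian inverse `[∇ₓₓ f(x;t)]⁻¹` -/
  hessInv : EuclideanSpace ℝ (Fin n) → ℝ →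
    EuclideanSpace ℝ (Fin n) →L[ℝ] EuclideanSpace ℝ (Fin n)
  /-- the mixed partial derivative `∇_{tx} f(x;t)` -/
  dtgrad : EuclideanSpace ℝ (Fin n) → ℝ → EuclideanSpace ℝ (Fin n)
  /-- the third derivative tensor `∇ₓₓₓ f(x;t)` -/
  d3 : EuclideanSpace ℝ (Fin n) → ℝ →
    EuclideanSpace ℝ (Fin n) →L[ℝ] EuclideanSpace ℝ (Fin n) →L[ℝ] EuclideanSpace ℝ (Fin n)
  /-- the time derivative of the Hessian `∇_{xtx} f(x;t)` -/
  dthess : EuclideanSpace ℝ (Fin n) → ℝ →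
    EuclideanSpace ℝ (Fin n) →L[ℝ] EuclideanSpace ℝ (Fin n)
  /-- the second time derivative of the gradient `∇_{ttx} f(x;t)` -/
  dttgrad : EuclideanSpace ℝ (Fin n) → ℝ → EuclideanSpace ℝ (Fin n)
  /-- the optimal trajectory `x*(t)` -/
  xstar : ℝ → EuclideanSpace ℝ (Fin n)
  /-- strong convexity constant -/
  m : ℝ
  /-- Hessian norm bound (gradient Lipschitz constant) -/
  L : ℝ
  C0 : ℝ
  C1 : ℝ
  C2 : ℝ
  C3 : ℝ
  m_pos : 0 < m
  grad_spec : ∀ (x : EuclideanSpace ℝ (Fin n)) (t : ℝ), HasGradientAt (fun y => f y t) (grad x t) x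
  hess_spec : ∀ (x : EuclideanSpace ℝ (Fin n)) (t : ℝ), HasFDerivAt (fun y => grad y t) (hess x t) x
  dtgrad_spec : ∀ (x : EuclideanSpace ℝ (Fin n)) (t : ℝ), HasDerivAt (fun s => grad x s) (dtgrad x t) t
  d3_spec : ∀ (x : EuclideanSpace ℝ (Fin n)) (t : ℝ), HasFDerivAt (fun y => hess y t) (d3 x t) x
  dthess_spec : ∀ (x : EuclideanSpace ℝ (Fin n)) (t : ℝ), HasDerivAt (fun s => hess x s) (dthess x t) t
  dttgrad_spec : ∀ (x : EuclideanSpace ℝ (Fin n)) (t : ℝ), HasDerivAt (fun s => dtgrad x s) (dttgrad x t) t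
  /-- Assumption 1: `∇ₓₓ f(x;t) ⪰ m·I` uniformly in `x` and `t`. -/
  strong_convex : ∀ (x : EuclideanSpace ℝ (Fin n)) (t : ℝ) (v : EuclideanSpace ℝ (Fin n)),
    m * ‖v‖ ^ 2 ≤ @inner ℝ _ _ v (hess x t v)
  hessInv_left : ∀ (x : EuclideanSpace ℝ (Fin n)) (t : ℝ), ContinuousLinearMap.comp (hessInv x t) (hess x t) =
    ContinuousLinearMap.id ℝ (EuclideanSpace ℝ (Fin n))
  hessInv_right : ∀ (x : EuclideanSpace ℝ (Fin n)) (t : ℝ), ContinuousLinearMap.comp (hess x t) (hessInv x t) =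
    ContinuousLinearMap.id ℝ (EuclideanSpace ℝ (Fin n))
  /-- Assumption 2: bounded derivatives, uniformly in `x` and `t`. -/
  hess_bound : ∀ (x : EuclideanSpace ℝ (Fin n)) (t : ℝ), ‖hess x t‖ ≤ L
  dtgrad_bound : ∀ (x : EuclideanSpace ℝ (Fin n)) (t : ℝ), ‖dtgrad x t‖ ≤ C0
  d3_bound : ∀ (x : EuclideanSpace ℝ (Fin n)) (t : ℝ), ‖d3 x t‖ ≤ C1
  dthess_bound : ∀ (x : EuclideanSpace ℝ (Fin n)) (t : ℝ), ‖dthess x t‖ ≤ C2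
  dttgrad_bound : ∀ (x : EuclideanSpace ℝ (Fin n)) (t : ℝ), ‖dttgrad x t‖ ≤ C3
  /-- `x*(t)` minimizes `f(·;t)` -/
  xstar_min : ∀ t : ℝ, IsMinOn (fun x => f x t) Set.univ (xstar t)
  /-- equivalently, `∇ₓ f(x*(t);t) = 0` -/
  xstar_grad : ∀ t : ℝ, grad (xstar t) t = 0


namespace TVOpt
open Set Filter
variable {n : ℕ} (P : TVOpt n)

local notation "E" => EuclideanSpace ℝ (Fin n)

lemma hsymm (t : ℝ) (x v w : E) :
    (inner ℝ (P.hess x t v) w : ℝ) = inner ℝ (P.hess x t w) v :=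
  hess_symm (fun y => P.f y t) (fun y => P.grad y t) (fun y => P.hess y t)
    (fun y => P.grad_spec y t) (fun y => P.hess_spec y t) x v w

lemma C0_nonneg : 0 ≤ P.C0 := le_trans (norm_nonneg (P.dtgrad 0 0)) (P.dtgrad_bound 0 0)
lemma C1_nonneg : 0 ≤ P.C1 := le_trans (norm_nonneg (P.d3 0 0)) (P.d3_bound 0 0)
lemma C2_nonneg : 0 ≤ P.C2 := le_trans (norm_nonneg (P.dthess 0 0)) (P.dthess_bound 0 0)
lemma C3_nonneg : 0 ≤ P.C3 := le_trans (norm_nonneg (P.dttgrad 0 0)) (P.dttgrad_bound 0 0)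

lemma m_le_L (hn : 0 < n) : P.m ≤ P.L := by
  set u : E := EuclideanSpace.single ⟨0, hn⟩ (1:ℝ) with hu
  have hnu : ‖u‖ = 1 := by rw [hu, EuclideanSpace.norm_single, norm_one]
  have h1 := P.strong_convex 0 0 u
  have h2 : (inner ℝ u (P.hess 0 0 u) : ℝ) ≤ P.L := by
    calc (inner ℝ u (P.hess 0 0 u) : ℝ) ≤ ‖u‖ * ‖P.hess 0 0 u‖ := real_inner_le_norm _ _
      _ ≤ ‖u‖ * (‖P.hess 0 0‖ * ‖u‖) :=
          mul_le_mul_of_nonneg_left ((P.hess 0 0).le_opNorm u) (norm_nonneg u)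
      _ ≤ P.L := by rw [hnu, one_mul, mul_one]; exact P.hess_bound 0 0
  rw [hnu] at h1; nlinarith

-- Lipschitz facts
lemma grad_lip_x (t : ℝ) (a b : E) : ‖P.grad a t - P.grad b t‖ ≤ P.L * ‖a - b‖ :=
  lip_of_fderiv (fun z => P.hess_spec z t) (fun z => P.hess_bound z t) b a

lemma hess_lip_x (t : ℝ) (a b : E) : ‖P.hess a t - P.hess b t‖ ≤ P.C1 * ‖a - b‖ :=
  lip_of_fderiv (fun z => P.d3_spec z t) (fun z => P.d3_bound z t) b a

lemma hess_lip_t (x : E) (u u' : ℝ) : ‖P.hess x u - P.hess x u'‖ ≤ P.C2 * ‖u - u'‖ :=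
  lip_of_deriv (fun s => P.dthess_spec x s) (fun s => P.dthess_bound x s) u' u

lemma dtgrad_lip_t (x : E) (u u' : ℝ) : ‖P.dtgrad x u - P.dtgrad x u'‖ ≤ P.C3 * ‖u - u'‖ :=
  lip_of_deriv (fun s => P.dttgrad_spec x s) (fun s => P.dttgrad_bound x s) u' u

lemma dtgrad_lip_x (t : ℝ) (a b : E) : ‖P.dtgrad a t - P.dtgrad b t‖ ≤ P.C2 * ‖a - b‖ := by
  apply deriv_le_of_lip ((P.dtgrad_spec a t).sub (P.dtgrad_spec b t))
  intro u u'
  have key := lip_of_fderiv (f := fun z : E => P.grad z u - P.grad z u')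
    (f' := fun z => P.hess z u - P.hess z u')
    (fun z => (P.hess_spec z u).sub (P.hess_spec z u'))
    (C := P.C2 * |u - u'|)
    (fun z => by have hz := P.hess_lip_t z u u'; rwa [Real.norm_eq_abs] at hz) b a
  have hre : (P.grad a u - P.grad a u') - (P.grad b u - P.grad b u')
      = (P.grad a u - P.grad b u) - (P.grad a u' - P.grad b u') := by abel
  calc ‖(P.grad a u - P.grad b u) - (P.grad a u' - P.grad b u')‖
      = ‖(P.grad a u - P.grad a u') - (P.grad b u - P.grad b u')‖ := by rw [hre]
    _ ≤ P.C2 * |u - u'| * ‖a - b‖ := key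
    _ = P.C2 * ‖a - b‖ * |u - u'| := by ring

-- second order Taylor bounds
lemma taylor_x (t : ℝ) (a b : E) :
    ‖P.grad a t - P.grad b t - P.hess b t (a - b)‖ ≤ P.C1 / 2 * ‖a - b‖ ^ 2 := by
  set d := a - b with hd
  have hf : ∀ s : ℝ, HasDerivAt (fun s : ℝ => P.grad (b + s • d) t - s • (P.hess b t d))
      (P.hess (b + s • d) t d - P.hess b t d) s := by
    intro s
    exact (grad_path_hasDerivAt' (fun z => P.hess_spec z t) b d s).sub
      (by simpa using (hasDerivAt_id s).smul_const (P.hess b t d))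
  have hb : ∀ s ∈ Icc (0:ℝ) 1, ‖P.hess (b + s • d) t d - P.hess b t d‖
      ≤ (P.C1 * ‖d‖ ^ 2) * s := by
    intro s hs
    calc ‖P.hess (b + s • d) t d - P.hess b t d‖
        = ‖(P.hess (b + s • d) t - P.hess b t) d‖ := by
          rw [ContinuousLinearMap.sub_apply]
      _ ≤ ‖P.hess (b + s • d) t - P.hess b t‖ * ‖d‖ := ContinuousLinearMap.le_opNorm _ _
      _ ≤ (P.C1 * ‖b + s • d - b‖) * ‖d‖ :=
          mul_le_mul_of_nonneg_right (P.hess_lip_x t _ b) (norm_nonneg d)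
      _ = (P.C1 * ‖d‖ ^ 2) * s := by
          rw [add_sub_cancel_left, norm_smul, Real.norm_eq_abs, abs_of_nonneg hs.1]; ring
  have := norm_sub_le_half_of_deriv_le hf hb
  simp only [one_smul, zero_smul, sub_zero, add_zero] at this
  have he : b + d = a := by rw [hd]; abel
  rw [he] at this
  calc ‖P.grad a t - P.grad b t - P.hess b t d‖
      = ‖(P.grad a t - P.hess b t d) - P.grad b t‖ := by rw [sub_right_comm]
    _ ≤ P.C1 * ‖d‖ ^ 2 / 2 := this
    _ = P.C1 / 2 * ‖d‖ ^ 2 := by ring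

lemma taylor_t (x : E) (t h : ℝ) (hh : 0 ≤ h) :
    ‖P.grad x (t + h) - P.grad x t - h • P.dtgrad x t‖ ≤ P.C3 / 2 * h ^ 2 := by
  have hf : ∀ s : ℝ, HasDerivAt (fun s : ℝ => P.grad x (t + s * h) - s • (h • P.dtgrad x t))
      (h • P.dtgrad x (t + s * h) - h • P.dtgrad x t) s := by
    intro s
    have hpath : HasDerivAt (fun s : ℝ => t + s * h) h s := by
      simpa using ((hasDerivAt_id s).mul_const h).const_add t
    have h1 : HasDerivAt (fun s : ℝ => P.grad x (t + s * h)) (h • P.dtgrad x (t + s * h)) s :=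
      (P.dtgrad_spec x (t + s * h)).scomp s hpath
    exact h1.sub (by simpa using (hasDerivAt_id s).smul_const (h • P.dtgrad x t))
  have hb : ∀ s ∈ Icc (0:ℝ) 1, ‖h • P.dtgrad x (t + s * h) - h • P.dtgrad x t‖
      ≤ (P.C3 * h ^ 2) * s := by
    intro s hs
    calc ‖h • P.dtgrad x (t + s * h) - h • P.dtgrad x t‖
        = ‖h‖ * ‖P.dtgrad x (t + s * h) - P.dtgrad x t‖ := by
          rw [← smul_sub, norm_smul]
      _ ≤ ‖h‖ * (P.C3 * ‖t + s * h - t‖) :=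
          mul_le_mul_of_nonneg_left (P.dtgrad_lip_t x _ t) (norm_nonneg _)
      _ = (P.C3 * h ^ 2) * s := by
          rw [add_sub_cancel_left, Real.norm_eq_abs, Real.norm_eq_abs, abs_of_nonneg hh,
            abs_mul, abs_of_nonneg hs.1, abs_of_nonneg hh]
          ring
  have := norm_sub_le_half_of_deriv_le hf hb
  simp only [one_smul, zero_smul, sub_zero, zero_mul, add_zero, one_mul] at this
  calc ‖P.grad x (t + h) - P.grad x t - h • P.dtgrad x t‖
      = ‖(P.grad x (t + h) - h • P.dtgrad x t) - P.grad x t‖ := by rw [sub_right_comm]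
    _ ≤ P.C3 * h ^ 2 / 2 := this
    _ = P.C3 / 2 * h ^ 2 := by ring

-- Hessian inverse facts
lemma hessInv_apply_hess (x : E) (t : ℝ) (v : E) : P.hessInv x t (P.hess x t v) = v := by
  have := ContinuousLinearMap.ext_iff.1 (P.hessInv_left x t) v
  simpa using this

lemma hess_apply_hessInv (x : E) (t : ℝ) (w : E) : P.hess x t (P.hessInv x t w) = w := by
  have := ContinuousLinearMap.ext_iff.1 (P.hessInv_right x t) w
  simpa using this

lemma hessInv_norm (x : E) (t : ℝ) (w : E) : P.m * ‖P.hessInv x t w‖ ≤ ‖w‖ := by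
  set v := P.hessInv x t w with hv
  have h1 := P.strong_convex x t v
  have h2 : P.hess x t v = w := P.hess_apply_hessInv x t w
  rw [h2] at h1
  have h3 : (inner ℝ v w : ℝ) ≤ ‖v‖ * ‖w‖ := real_inner_le_norm v w
  rcases eq_or_lt_of_le (norm_nonneg v) with h0 | h0
  · rw [← h0]; simp [norm_nonneg w]
  · nlinarith

-- strong monotonicity distance bound
lemma dist_xstar (a : E) (t : ℝ) : P.m * ‖a - P.xstar t‖ ≤ ‖P.grad a t‖ := by
  have h1 := strong_mono (fun z => P.hess_spec z t) (fun z v => P.strong_convex z t v)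
    a (P.xstar t)
  rw [P.xstar_grad t, sub_zero] at h1
  have h2 : (inner ℝ (a - P.xstar t) (P.grad a t) : ℝ) ≤ ‖a - P.xstar t‖ * ‖P.grad a t‖ :=
    real_inner_le_norm _ _
  rcases eq_or_lt_of_le (norm_nonneg (a - P.xstar t)) with h0 | h0
  · rw [← h0]; simp [norm_nonneg]
  · nlinarith

lemma div_bound {X Y : ℝ} (P : TVOpt n) (hXY : P.m * X ≤ Y) : X ≤ Y / P.m := by
  rw [le_div_iff₀ P.m_pos]; linarith

/-- the prediction map is `σ`-Lipschitz -/
lemma pred_lip (t h : ℝ) (hh : 0 ≤ h) (a b : E) :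
    ‖(a - h • P.hessInv a t (P.dtgrad a t)) - (b - h • P.hessInv b t (P.dtgrad b t))‖
      ≤ (1 + h * (P.C0 * P.C1 / P.m ^ 2 + P.C2 / P.m)) * ‖a - b‖ := by
  have hm := P.m_pos
  set Fa := P.hessInv a t (P.dtgrad a t) with hFa
  set Fb := P.hessInv b t (P.dtgrad b t) with hFb
  set w := P.dtgrad b t with hw
  have hsplit : Fa - Fb = P.hessInv a t (P.dtgrad a t - P.dtgrad b t)
      + (P.hessInv a t w - P.hessInv b t w) := by
    rw [hFa, hFb, map_sub]; abel
  have h1 : ‖P.hessInv a t (P.dtgrad a t - P.dtgrad b t)‖ ≤ P.C2 * ‖a - b‖ / P.m := by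
    apply P.div_bound
    calc P.m * ‖P.hessInv a t (P.dtgrad a t - P.dtgrad b t)‖
        ≤ ‖P.dtgrad a t - P.dtgrad b t‖ := P.hessInv_norm a t _
      _ ≤ P.C2 * ‖a - b‖ := P.dtgrad_lip_x t a b
  have hres : P.hessInv a t w - P.hessInv b t w
      = P.hessInv a t (P.hess b t (P.hessInv b t w) - P.hess a t (P.hessInv b t w)) := by
    rw [map_sub, P.hess_apply_hessInv, P.hessInv_apply_hess]
  have hwb : ‖P.hessInv b t w‖ ≤ P.C0 / P.m :=
    P.div_bound (le_trans (P.hessInv_norm b t w) (P.dtgrad_bound b t))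
  have h2 : ‖P.hessInv a t w - P.hessInv b t w‖ ≤ P.C1 * ‖a - b‖ * (P.C0 / P.m) / P.m := by
    rw [hres]
    apply P.div_bound
    calc P.m * ‖P.hessInv a t (P.hess b t (P.hessInv b t w) - P.hess a t (P.hessInv b t w))‖
        ≤ ‖P.hess b t (P.hessInv b t w) - P.hess a t (P.hessInv b t w)‖ := P.hessInv_norm a t _
      _ = ‖(P.hess b t - P.hess a t) (P.hessInv b t w)‖ := by
          rw [ContinuousLinearMap.sub_apply]
      _ ≤ ‖P.hess b t - P.hess a t‖ * ‖P.hessInv b t w‖ := ContinuousLinearMap.le_opNorm _ _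
      _ ≤ (P.C1 * ‖b - a‖) * (P.C0 / P.m) := by
          exact mul_le_mul (P.hess_lip_x t b a) hwb (norm_nonneg _)
            (mul_nonneg P.C1_nonneg (norm_nonneg _))
      _ = P.C1 * ‖a - b‖ * (P.C0 / P.m) := by rw [norm_sub_rev]
  have hF : ‖Fa - Fb‖ ≤ (P.C0 * P.C1 / P.m ^ 2 + P.C2 / P.m) * ‖a - b‖ := by
    rw [hsplit]
    calc ‖P.hessInv a t (P.dtgrad a t - P.dtgrad b t) + (P.hessInv a t w - P.hessInv b t w)‖
        ≤ ‖P.hessInv a t (P.dtgrad a t - P.dtgrad b t)‖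
          + ‖P.hessInv a t w - P.hessInv b t w‖ := norm_add_le _ _
      _ ≤ P.C2 * ‖a - b‖ / P.m + P.C1 * ‖a - b‖ * (P.C0 / P.m) / P.m :=
          add_le_add h1 h2
      _ = (P.C0 * P.C1 / P.m ^ 2 + P.C2 / P.m) * ‖a - b‖ := by
          field_simp; ring
  have hvec : (a - h • Fa) - (b - h • Fb) = (a - b) - h • (Fa - Fb) := by
    rw [smul_sub]; abel
  rw [hvec]
  calc ‖(a - b) - h • (Fa - Fb)‖ ≤ ‖a - b‖ + ‖h • (Fa - Fb)‖ := norm_sub_le _ _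
    _ = ‖a - b‖ + h * ‖Fa - Fb‖ := by
        rw [norm_smul, Real.norm_eq_abs, abs_of_nonneg hh]
    _ ≤ ‖a - b‖ + h * ((P.C0 * P.C1 / P.m ^ 2 + P.C2 / P.m) * ‖a - b‖) := by
        have := mul_le_mul_of_nonneg_left hF hh
        linarith
    _ = (1 + h * (P.C0 * P.C1 / P.m ^ 2 + P.C2 / P.m)) * ‖a - b‖ := by ring

/-- prediction error at the optimizer -/
lemma pred_err (t h : ℝ) (hh : 0 ≤ h) :
    ‖(P.xstar t - h • P.hessInv (P.xstar t) t (P.dtgrad (P.xstar t) t)) - P.xstar (t + h)‖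
      ≤ h ^ 2 / 2 * (P.C0 ^ 2 * P.C1 / P.m ^ 3 + 2 * P.C0 * P.C2 / P.m ^ 2 + P.C3 / P.m) := by
  have hm := P.m_pos
  set xs := P.xstar t with hxs
  set u := P.dtgrad xs t with hu
  set w := P.hessInv xs t u with hwdef
  set a := xs - h • w with hadef
  set q : ℝ := P.C0 / P.m with hq
  have hq0 : 0 ≤ q := by rw [hq]; exact div_nonneg P.C0_nonneg P.m_pos.le
  have hwq : ‖w‖ ≤ q := P.div_bound (le_trans (P.hessInv_norm xs t u) (P.dtgrad_bound xs t))
  have hHw : P.hess xs t w = u := P.hess_apply_hessInv xs t u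
  have hd : a - xs = -(h • w) := by rw [hadef]; abel
  have hdn : ‖a - xs‖ = h * ‖w‖ := by
    rw [hd, norm_neg, norm_smul, Real.norm_eq_abs, abs_of_nonneg hh]
  have hdq : ‖a - xs‖ ≤ h * q := by
    rw [hdn]; exact mul_le_mul_of_nonneg_left hwq hh
  have hHd : P.hess xs t (a - xs) = -(h • u) := by
    rw [hd, map_neg, map_smul, hHw]
  -- the three remainder terms
  have hA : ‖P.grad a (t + h) - P.grad xs (t + h) - P.hess xs (t + h) (a - xs)‖
      ≤ P.C1 / 2 * (h * q) ^ 2 := by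
    refine le_trans (P.taylor_x (t + h) a xs) ?_
    have h2 : ‖a - xs‖ ^ 2 ≤ (h * q) ^ 2 := by
      apply pow_le_pow_left₀ (norm_nonneg _) hdq
    have : 0 ≤ P.C1 / 2 := by have := P.C1_nonneg; linarith
    exact mul_le_mul_of_nonneg_left h2 this
  have hB : ‖P.hess xs (t + h) (a - xs) - P.hess xs t (a - xs)‖ ≤ P.C2 * h * (h * q) := by
    calc ‖P.hess xs (t + h) (a - xs) - P.hess xs t (a - xs)‖
        = ‖(P.hess xs (t + h) - P.hess xs t) (a - xs)‖ := by
          rw [ContinuousLinearMap.sub_apply]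
      _ ≤ ‖P.hess xs (t + h) - P.hess xs t‖ * ‖a - xs‖ := ContinuousLinearMap.le_opNorm _ _
      _ ≤ (P.C2 * ‖t + h - t‖) * (h * q) := by
          exact mul_le_mul (P.hess_lip_t xs (t + h) t) hdq (norm_nonneg _)
            (mul_nonneg P.C2_nonneg (norm_nonneg _))
      _ = P.C2 * h * (h * q) := by
          rw [add_sub_cancel_left, Real.norm_eq_abs, abs_of_nonneg hh]
  have hC : ‖P.grad xs (t + h) - P.grad xs t - h • P.dtgrad xs t‖ ≤ P.C3 / 2 * h ^ 2 :=
    P.taylor_t xs t h hh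
  -- the identity
  have hiden : P.grad a (t + h)
      = (P.grad a (t + h) - P.grad xs (t + h) - P.hess xs (t + h) (a - xs))
      + (P.hess xs (t + h) (a - xs) - P.hess xs t (a - xs))
      + (P.grad xs (t + h) - P.grad xs t - h • P.dtgrad xs t) := by
    rw [hHd]
    have hg0 : P.grad xs t = 0 := P.xstar_grad t
    rw [hg0, ← hu]
    abel
  have hgb : ‖P.grad a (t + h)‖
      ≤ h ^ 2 / 2 * (P.C1 * q ^ 2 + 2 * P.C2 * q + P.C3) := by
    rw [hiden]
    calc ‖_ + _ + _‖ ≤ ‖_ + _‖ + ‖_‖ := norm_add_le _ _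
      _ ≤ ‖_‖ + ‖_‖ + ‖_‖ := by
          have := norm_add_le (P.grad a (t + h) - P.grad xs (t + h)
            - P.hess xs (t + h) (a - xs)) (P.hess xs (t + h) (a - xs) - P.hess xs t (a - xs))
          linarith
      _ ≤ P.C1 / 2 * (h * q) ^ 2 + P.C2 * h * (h * q) + P.C3 / 2 * h ^ 2 :=
          add_le_add (add_le_add hA hB) hC
      _ = h ^ 2 / 2 * (P.C1 * q ^ 2 + 2 * P.C2 * q + P.C3) := by ring
  have hfin : ‖a - P.xstar (t + h)‖
      ≤ h ^ 2 / 2 * (P.C1 * q ^ 2 + 2 * P.C2 * q + P.C3) / P.m :=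
    P.div_bound (le_trans (P.dist_xstar a (t + h)) hgb)
  refine le_trans hfin (le_of_eq ?_)
  rw [hq]
  field_simp

end TVOpt

section Iter
variable {V : Type*} [NormedAddCommGroup V]
lemma iterate_contract {T : V → V} {xs : V} {ρ : ℝ} (hρ0 : 0 ≤ ρ)
    (hone : ∀ y, ‖T y - xs‖ ≤ ρ * ‖y - xs‖) :
    ∀ (j : ℕ) (y : V), ‖T^[j] y - xs‖ ≤ ρ ^ j * ‖y - xs‖ := by
  intro j
  induction j with
  | zero => intro y; simp
  | succ j ih =>
    intro y
    rw [Function.iterate_succ_apply']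
    calc ‖T (T^[j] y) - xs‖ ≤ ρ * ‖T^[j] y - xs‖ := hone _
      _ ≤ ρ * (ρ ^ j * ‖y - xs‖) := mul_le_mul_of_nonneg_left (ih y) hρ0
      _ = ρ ^ (j + 1) * ‖y - xs‖ := by rw [pow_succ]; ring
end Iter

/-- **Theorem 1, part ii.** If moreover the sampling period is small
enough that `ρ^τ·σ < 1`, GTT converges exponentially up to an `O(h²)` error. -/
theorem gtt_convergence_small_period (n : ℕ) (hn : 0 < n) (P : TVOpt n) (h : ℝ) (hh : 0 < h)
    (γ : ℝ) (τ : ℕ) (hτ : 1 ≤ τ) (hγ0 : 0 < γ) (hγL : γ < 2 / P.L)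
    (ρ : ℝ) (hρ : ρ = max |1 - γ * P.m| |1 - γ * P.L|)
    (σ : ℝ) (hσ : σ = 1 + h * (P.C0 * P.C1 / P.m ^ 2 + P.C2 / P.m))
    (hsmall : ρ ^ τ * σ < 1)
    (x : ℕ → EuclideanSpace ℝ (Fin n))
    (hrec : ∀ k : ℕ, x (k + 1) =
      (fun y => y - γ • P.grad y (((k : ℝ) + 1) * h))^[τ]
        (x k - h • P.hessInv (x k) ((k : ℝ) * h) (P.dtgrad (x k) ((k : ℝ) * h)))) :
    ρ < 1 ∧ ∀ k : ℕ,
      ‖x k - P.xstar ((k : ℝ) * h)‖ ≤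
        (ρ ^ τ * σ) ^ k * ‖x 0 - P.xstar 0‖ +
        ρ ^ τ * (h ^ 2 / 2) *
          (P.C0 ^ 2 * P.C1 / P.m ^ 3 + 2 * P.C0 * P.C2 / P.m ^ 2 + P.C3 / P.m) *
          ((1 - (ρ ^ τ * σ) ^ k) / (1 - ρ ^ τ * σ)) := by
  have hm := P.m_pos
  have hmL := P.m_le_L hn
  have hL : 0 < P.L := lt_of_lt_of_le hm hmL
  have hγL2 : γ * P.L < 2 := by
    rw [lt_div_iff₀ hL] at hγL; linarith
  have hγm2 : γ * P.m < 2 := by nlinarith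
  have hρ1 : ρ < 1 := by
    rw [hρ]
    apply max_lt <;> rw [abs_lt] <;> constructor <;> nlinarith
  have hρ0 : 0 ≤ ρ := by rw [hρ]; exact le_max_of_le_left (abs_nonneg _)
  refine ⟨hρ1, ?_⟩
  set D := h ^ 2 / 2 * (P.C0 ^ 2 * P.C1 / P.m ^ 3 + 2 * P.C0 * P.C2 / P.m ^ 2 + P.C3 / P.m)
    with hD
  have hD0 : 0 ≤ D := by
    rw [hD]
    have h0 := P.C0_nonneg; have h1 := P.C1_nonneg; have h2 := P.C2_nonneg
    have h3 := P.C3_nonneg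
    positivity
  have hσ1 : 1 ≤ σ := by
    rw [hσ]
    have h0 := P.C0_nonneg; have h1 := P.C1_nonneg; have h2 := P.C2_nonneg
    nlinarith [div_nonneg (mul_nonneg h0 h1) (sq_nonneg P.m), div_nonneg h2 hm.le]
  have hσ0 : 0 ≤ σ := by linarith
  set q : ℝ := ρ ^ τ * σ with hqdef
  have hq0 : 0 ≤ q := mul_nonneg (pow_nonneg hρ0 τ) hσ0
  have hq1 : q < 1 := hsmall
  have h1q : (0:ℝ) < 1 - q := by linarith
  -- the per-step estimate
  have hstep : ∀ k : ℕ, ‖x (k + 1) - P.xstar (((k : ℝ) + 1) * h)‖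
      ≤ ρ ^ τ * (σ * ‖x k - P.xstar ((k : ℝ) * h)‖ + D) := by
    intro k
    set t0 : ℝ := (k : ℝ) * h with ht0
    set t1 : ℝ := ((k : ℝ) + 1) * h with ht1
    have ht01 : t1 = t0 + h := by rw [ht0, ht1]; ring
    have hone : ∀ y, ‖y - γ • P.grad y t1 - P.xstar t1‖ ≤ ρ * ‖y - P.xstar t1‖ := by
      intro y
      exact gd_contraction hm hmL (fun z => P.hess_spec z t1) (fun z v w => P.hsymm t1 z v w)
        (fun z v => P.strong_convex z t1 v) (fun z => P.hess_bound z t1) hγ0 hρ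
        (P.xstar_grad t1) y
    have hiter := iterate_contract hρ0 (T := fun y => y - γ • P.grad y t1) hone τ
    set p : EuclideanSpace ℝ (Fin n) := x k - h • P.hessInv (x k) t0 (P.dtgrad (x k) t0)
      with hp
    have hx1 : x (k + 1) = (fun y => y - γ • P.grad y t1)^[τ] p := hrec k
    have htri : ‖p - P.xstar t1‖ ≤ σ * ‖x k - P.xstar t0‖ + D := by
      have hlip := P.pred_lip t0 h hh.le (x k) (P.xstar t0)
      have herr := P.pred_err t0 h hh.le
      rw [← ht01] at herr
      calc ‖p - P.xstar t1‖
          ≤ ‖p - (P.xstar t0 - h • P.hessInv (P.xstar t0) t0 (P.dtgrad (P.xstar t0) t0))‖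
            + ‖(P.xstar t0 - h • P.hessInv (P.xstar t0) t0 (P.dtgrad (P.xstar t0) t0))
              - P.xstar t1‖ := norm_sub_le_norm_sub_add_norm_sub _ _ _
        _ ≤ σ * ‖x k - P.xstar t0‖ + D := by
            rw [hp, hσ, hD]
            exact add_le_add hlip herr
    calc ‖x (k + 1) - P.xstar t1‖ = ‖(fun y => y - γ • P.grad y t1)^[τ] p - P.xstar t1‖ := by
          rw [hx1]
      _ ≤ ρ ^ τ * ‖p - P.xstar t1‖ := hiter p
      _ ≤ ρ ^ τ * (σ * ‖x k - P.xstar t0‖ + D) :=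
          mul_le_mul_of_nonneg_left htri (pow_nonneg hρ0 τ)
  -- main induction
  intro k
  induction k with
  | zero =>
    simp only [Nat.cast_zero, zero_mul, pow_zero, one_mul, sub_self, zero_div, mul_zero]
    norm_num
  | succ k ih =>
    have hcast : ((k + 1 : ℕ) : ℝ) = (k : ℝ) + 1 := by push_cast; ring
    rw [hcast]
    have hk := hstep k
    have e0 : ℝ := ‖x 0 - P.xstar 0‖
    calc ‖x (k + 1) - P.xstar (((k : ℝ) + 1) * h)‖
        ≤ ρ ^ τ * (σ * ‖x k - P.xstar ((k : ℝ) * h)‖ + D) := hk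
      _ ≤ ρ ^ τ * (σ * (q ^ k * ‖x 0 - P.xstar 0‖
            + ρ ^ τ * (h ^ 2 / 2) * (P.C0 ^ 2 * P.C1 / P.m ^ 3 + 2 * P.C0 * P.C2 / P.m ^ 2
              + P.C3 / P.m) * ((1 - q ^ k) / (1 - q))) + D) := by
          apply mul_le_mul_of_nonneg_left _ (pow_nonneg hρ0 τ)
          apply add_le_add_left
          exact mul_le_mul_of_nonneg_left ih hσ0
      _ = q ^ (k + 1) * ‖x 0 - P.xstar 0‖
            + ρ ^ τ * (h ^ 2 / 2) * (P.C0 ^ 2 * P.C1 / P.m ^ 3 + 2 * P.C0 * P.C2 / P.m ^ 2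
              + P.C3 / P.m) * ((1 - q ^ (k + 1)) / (1 - q)) := by
          rw [hqdef, hD]
          have hne : (1:ℝ) - ρ ^ τ * σ ≠ 0 := by rw [← hqdef]; exact h1q.ne'
          field_simp
          ring
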